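/- Let p > 2. There exists a constant C_p such that for any α_k ∈ [0,1] and b_k ∈ ℂ (k = 0,…,N), if X_k are independent Bernoulli random variables with P(X_k = 1) = α_k, then E(|Σ_{k=0}^N b_k(X_k − α_k)|^p) ≤ C_p · (max_k |b_k|)^p · (1 + Σ_{k=0}^N α_k)^{p/2}. -/

import Mathlib

open Complex MeasureTheory ProbabilityTheory Finset
open Real



lemma pow_le_factorial_mul_exp (n : ℕ) {x : ℝ} (hx : 0 ≤ x) :
    x ^ n ≤ n.factorial * Real.exp x := by
  have h := Real.sum_le_exp_of_nonneg hx (n + 1)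
  have h2 : x ^ n / n.factorial ≤ ∑ i ∈ Finset.range (n + 1), x ^ i / i.factorial := by
    refine Finset.single_le_sum (f := fun i => x ^ i / i.factorial) ?_ (Finset.self_mem_range_succ n)
    intro i _
    positivity
  have h3 : x ^ n / n.factorial ≤ Real.exp x := le_trans h2 h
  have hn : (0:ℝ) < n.factorial := by positivity
  calc x ^ n = (x ^ n / n.factorial) * n.factorial := by field_simp
    _ ≤ Real.exp x * n.factorial := by
        exact mul_le_mul_of_nonneg_right h3 hn.le
    _ = n.factorial * Real.exp x := by ring

lemma rpow_le_one_add_pow {y : ℝ} (hy : 0 ≤ y) {p : ℝ} (hp : 0 ≤ p) {n : ℕ} (hn : p ≤ n) :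
    y ^ p ≤ 1 + y ^ n := by
  rcases le_or_gt y 1 with h | h
  · have : y ^ p ≤ 1 := Real.rpow_le_one hy h hp
    have : (0:ℝ) ≤ y ^ n := by positivity
    linarith [Real.rpow_le_one hy h hp]
  · have h1 : y ^ p ≤ y ^ (n:ℝ) := Real.rpow_le_rpow_of_exponent_le h.le hn
    rw [Real.rpow_natCast] at h1
    have : (0:ℝ) ≤ y ^ n := by positivity
    linarith

lemma add_rpow_le {a c : ℝ} (ha : 0 ≤ a) (hc : 0 ≤ c) {p : ℝ} (hp : 0 ≤ p) :
    (a + c) ^ p ≤ 2 ^ p * (a ^ p + c ^ p) := by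
  have hmax : a + c ≤ 2 * max a c := by
    rcases max_cases a c with ⟨h1, h2⟩ | ⟨h1, h2⟩ <;> rw [h1] <;> linarith
  have h2 : (a + c) ^ p ≤ (2 * max a c) ^ p :=
    Real.rpow_le_rpow (by linarith) hmax hp
  have h3 : (2 * max a c) ^ p = 2 ^ p * (max a c) ^ p :=
    Real.mul_rpow (by norm_num) (le_max_iff.2 (Or.inl ha))
  have h4 : (max a c) ^ p ≤ a ^ p + c ^ p := by
    rcases max_cases a c with ⟨h1, _⟩ | ⟨h1, _⟩ <;> rw [h1]
    · nlinarith [Real.rpow_nonneg hc p]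
    · nlinarith [Real.rpow_nonneg ha p]
  calc (a + c) ^ p ≤ 2 ^ p * (max a c) ^ p := h3 ▸ h2
    _ ≤ 2 ^ p * (a ^ p + c ^ p) := by
        have : (0:ℝ) ≤ (2:ℝ) ^ p := Real.rpow_nonneg (by norm_num) p
        nlinarith

lemma bernoulli_mgf_bound {α u : ℝ} (hα0 : 0 ≤ α) (hα1 : α ≤ 1) (hu : |u| ≤ 1) :
    (1 - α) * Real.exp (-(u * α)) + α * Real.exp (u * (1 - α)) ≤ Real.exp (α * u ^ 2) := by
  have key : Real.exp u ≤ 1 + u + u ^ 2 := by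
    have h := Real.exp_bound hu (n := 2) (by norm_num)
    have h2 : ∑ i ∈ Finset.range 2, u ^ i / i.factorial = 1 + u := by
      norm_num [Finset.sum_range_succ]
    rw [h2] at h
    have hsq : |u| ^ 2 = u ^ 2 := _root_.sq_abs u
    have h5 := abs_le.1 h
    norm_num [Nat.factorial, hsq] at h5
    nlinarith [h5.2]
  have e1 : Real.exp (u * (1 - α)) = Real.exp (-(u * α)) * Real.exp u := by
    rw [← Real.exp_add]; ring_nf
  have step1 : (1 - α) * Real.exp (-(u * α)) + α * Real.exp (u * (1 - α))
      = Real.exp (-(u * α)) * (1 - α + α * Real.exp u) := by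
    rw [e1]; ring
  have step2 : 1 - α + α * Real.exp u ≤ Real.exp (α * (Real.exp u - 1)) := by
    have := Real.add_one_le_exp (α * (Real.exp u - 1))
    linarith
  have step3 : α * (Real.exp u - 1) - u * α ≤ α * u ^ 2 := by
    nlinarith [key, hα0]
  calc (1 - α) * Real.exp (-(u * α)) + α * Real.exp (u * (1 - α))
      = Real.exp (-(u * α)) * (1 - α + α * Real.exp u) := step1
    _ ≤ Real.exp (-(u * α)) * Real.exp (α * (Real.exp u - 1)) := by
        have : (0:ℝ) < Real.exp (-(u * α)) := Real.exp_pos _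
        have h4 : (0:ℝ) ≤ 1 - α + α * Real.exp u := by nlinarith [Real.exp_pos u]
        nlinarith
    _ = Real.exp (α * (Real.exp u - 1) - u * α) := by rw [← Real.exp_add]; ring_nf
    _ ≤ Real.exp (α * u ^ 2) := Real.exp_le_exp.2 step3


lemma iIndepFun_congr_ae {Ω : Type} {mΩ : MeasurableSpace Ω} {μ : Measure Ω}
    {ι : Type*} {f g : ι → Ω → ℝ}
    (hf : iIndepFun f μ) (h : ∀ i, f i =ᵐ[μ] g i) :
    iIndepFun g μ := by
  rw [iIndepFun_iff_measure_inter_preimage_eq_mul] at hf ⊢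
  intro S sets hsets
  have hae : ∀ i ∈ S, (g i ⁻¹' sets i : Set Ω) =ᵐ[μ] (f i ⁻¹' sets i : Set Ω) := by
    intro i _
    filter_upwards [h i] with ω hω
    show (g i ω ∈ sets i) = (f i ω ∈ sets i)
    rw [hω]
  have h1 : μ (⋂ i ∈ S, g i ⁻¹' sets i) = μ (⋂ i ∈ S, f i ⁻¹' sets i) := by
    apply measure_congr
    rw [Filter.eventuallyEq_set]
    have hae' : ∀ i ∈ S, ∀ᵐ ω ∂μ, (ω ∈ g i ⁻¹' sets i ↔ ω ∈ f i ⁻¹' sets i) := by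
      intro i hi
      exact Filter.eventuallyEq_set.1 (hae i hi)
    have := (ae_ball_iff S.countable_toSet).2 hae'
    filter_upwards [this] with ω hω
    simp only [Set.mem_iInter]
    constructor
    · intro hmem i hi
      exact ((hω i hi).1 (hmem i hi) : _)
    · intro hmem i hi
      exact (hω i hi).2 (hmem i hi)
  rw [h1, hf S hsets]
  refine Finset.prod_congr rfl fun i hi => ?_
  exact (measure_congr (hae i hi)).symm


lemma exp_sum_bound {Ω : Type} {mΩ : MeasurableSpace Ω} {μ : Measure Ω}
    [IsProbabilityMeasure μ] {N : ℕ} (α : Fin (N + 1) → ℝ) (c : Fin (N + 1) → ℝ)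
    {m : ℝ} (hm : 0 < m) (Y : Fin (N + 1) → Ω → ℝ)
    (hα : ∀ k, α k ∈ Set.Icc (0:ℝ) 1)
    (hindepY : iIndepFun Y μ)
    (hYmeas : ∀ k, c k ≠ 0 → Measurable (Y k))
    (hZint : ∀ k, c k ≠ 0 → ∫ ω, (if Y k ω = 1 then (1:ℝ) else 0) ∂μ = α k)
    (hu : ∀ k, |m⁻¹ * c k| ≤ 1) :
    ∫ ω, Real.exp (∑ k, m⁻¹ * c k * ((if Y k ω = 1 then (1:ℝ) else 0) - α k)) ∂μ ≤
      Real.exp (∑ k, α k * (m⁻¹ * c k) ^ 2) := by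
  classical
  set g : Fin (N + 1) → ℝ → ℝ :=
    fun k x => m⁻¹ * c k * ((if x = 1 then (1:ℝ) else 0) - α k) with hg_def
  have hg : ∀ k, Measurable (g k) := by
    intro k
    apply Measurable.const_mul
    apply Measurable.sub _ measurable_const
    exact Measurable.ite (MeasurableSet.singleton 1) measurable_const measurable_const
  set V : Fin (N + 1) → Ω → ℝ := fun k => g k ∘ Y k with hV_def
  have hVindep : iIndepFun V μ := hindepY.comp g hg
  have hVmeas : ∀ k, Measurable (V k) := by
    intro k
    by_cases hck : c k = 0
    · have : V k = fun _ => 0 := by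
        funext ω; simp [hV_def, hg_def, hck]
      rw [this]; exact measurable_const
    · exact (hg k).comp (hYmeas k hck)
  have hmgf := hVindep.mgf_sum hVmeas (t := 1) Finset.univ
  -- identify lhs with mgf
  have hlhs : ∫ ω, Real.exp (∑ k, m⁻¹ * c k * ((if Y k ω = 1 then (1:ℝ) else 0) - α k)) ∂μ
      = mgf (∑ k, V k) μ 1 := by
    unfold mgf
    congr 1
    funext ω
    simp [hV_def, hg_def, Finset.sum_apply]
  rw [hlhs, hmgf]
  -- per-factor bound
  have hfac : ∀ k, mgf (V k) μ 1 ≤ Real.exp (α k * (m⁻¹ * c k) ^ 2) := by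
    intro k
    obtain ⟨hα0, hα1⟩ := hα k
    by_cases hck : c k = 0
    · have : V k = fun _ => 0 := by funext ω; simp [hV_def, hg_def, hck]
      rw [this]
      rw [mgf_const]
      simp [hck]
    · set u : ℝ := m⁻¹ * c k with hu_def
      set Z : Ω → ℝ := fun ω => if Y k ω = 1 then (1:ℝ) else 0 with hZ_def
      have hZmeas : Measurable Z :=
        Measurable.ite ((hYmeas k hck) (MeasurableSet.singleton 1)) measurable_const
          measurable_const
      have hZ01 : ∀ ω, Z ω = 0 ∨ Z ω = 1 := by
        intro ω; by_cases h : Y k ω = 1 <;> simp [hZ_def, h]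
      have hZbd : ∀ ω, ‖Z ω‖ ≤ 1 := by
        intro ω; rcases hZ01 ω with h | h <;> simp [h]
      have hZint' : Integrable Z μ :=
        Integrable.mono' (integrable_const 1) hZmeas.aestronglyMeasurable
          (Filter.Eventually.of_forall hZbd)
      have hpt : ∀ ω, Real.exp (1 * V k ω)
          = Real.exp (-(u * α k)) + Z ω * (Real.exp (u * (1 - α k)) - Real.exp (-(u * α k))) := by
        intro ω
        rcases hZ01 ω with h | h
        · have h' : ¬ (Y k ω = 1) := by
            intro hy; simp [hZ_def, hy] at h
          simp only [hV_def, hg_def, Function.comp_apply, if_neg h', one_mul, h]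
          rw [hu_def]; ring_nf
        · have h' : Y k ω = 1 := by
            by_contra hy; simp [hZ_def, hy] at h
          simp only [hV_def, hg_def, Function.comp_apply, if_pos h', one_mul, h]
          rw [hu_def]; ring_nf
      have : mgf (V k) μ 1 = (1 - α k) * Real.exp (-(u * α k)) + α k * Real.exp (u * (1 - α k)) := by
        unfold mgf
        rw [integral_congr_ae (Filter.Eventually.of_forall hpt)]
        rw [integral_add (integrable_const _) (hZint'.mul_const _)]
        rw [integral_const, integral_mul_const]
        simp [show ∫ ω, Z ω ∂μ = α k from hZint k hck]
        ring
      rw [this]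
      exact bernoulli_mgf_bound hα0 hα1 (hu k)
  calc ∏ k, mgf (V k) μ 1 ≤ ∏ k, Real.exp (α k * (m⁻¹ * c k) ^ 2) := by
        apply Finset.prod_le_prod
        · intro k _; exact mgf_nonneg
        · intro k _; exact hfac k
    _ = Real.exp (∑ k, α k * (m⁻¹ * c k) ^ 2) := by
        rw [Real.exp_sum]
lemma exp_abs_le {x : ℝ} : Real.exp |x| ≤ Real.exp x + Real.exp (-x) := by
  rcases abs_cases x with ⟨h, _⟩ | ⟨h, _⟩ <;> rw [h] <;>
    [linarith [Real.exp_pos (-x)]; linarith [Real.exp_pos x]]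

set_option maxHeartbeats 2000000 in
lemma good_case (p : ℝ) (hp : 2 < p) (n : ℕ) (hn : p ≤ n)
    (N : ℕ) (α : Fin (N + 1) → ℝ) (b : Fin (N + 1) → ℂ)
    (Ω : Type) (mΩ : MeasurableSpace Ω) (μ : Measure Ω)
    [IsProbabilityMeasure μ] (X : Fin (N + 1) → Ω → ℝ)
    (hα : ∀ k, α k ∈ Set.Icc (0:ℝ) 1)
    (hindep : iIndepFun X μ)
    (h01 : ∀ k ω, X k ω = 0 ∨ X k ω = 1)
    (hint : ∀ k, ∫ ω, X k ω ∂μ = α k)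
    (haem : ∀ k, b k ≠ 0 → AEMeasurable (X k) μ) :
    (∫ ω, ‖∑ k, (b k : ℂ) * ((X k ω : ℝ) - α k)‖ ^ p ∂μ) ≤
      (2 ^ (p + 1) * (1 + 2 * n.factorial * Real.exp 1)) *
        (⨆ k, ‖b k‖) ^ p * (1 + ∑ k, α k) ^ (p / 2) := by
  classical
  have hp0 : (0:ℝ) < p := by linarith
  set M : ℝ := ⨆ k, ‖b k‖ with hM_def
  have hbdd : BddAbove (Set.range fun k => ‖b k‖) :=
    Set.Finite.bddAbove (Set.finite_range _)
  have hMk : ∀ k, ‖b k‖ ≤ M := fun k => le_ciSup hbdd k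
  have hM0 : 0 ≤ M := le_trans (norm_nonneg _) (hMk 0)
  set A : ℝ := ∑ k, α k with hA_def
  have hA0 : 0 ≤ A := Finset.sum_nonneg fun k _ => (hα k).1
  have h1A : (1:ℝ) ≤ 1 + A := by linarith
  have hRHS0 : 0 ≤ (1 + A) ^ (p / 2) := Real.rpow_nonneg (by linarith) _
  rcases eq_or_lt_of_le hM0 with hM | hM
  · -- all b k = 0
    have hb0 : ∀ k, b k = 0 := by
      intro k
      have h := hMk k
      rw [← hM] at h
      exact norm_eq_zero.1 (le_antisymm h (norm_nonneg _))
    have hzero : ∀ ω, ‖∑ k, (b k : ℂ) * ((X k ω : ℝ) - α k)‖ ^ p = 0 := by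
      intro ω
      rw [show (∑ k, (b k : ℂ) * ((X k ω : ℝ) - α k)) = 0 by
        apply Finset.sum_eq_zero; intro k _; rw [hb0 k]; ring]
      simp [Real.zero_rpow (ne_of_gt hp0)]
    rw [show (fun ω => ‖∑ k, (b k : ℂ) * ((X k ω : ℝ) - α k)‖ ^ p)
        = fun _ => (0:ℝ) from funext hzero]
    rw [integral_const]
    simp only [smul_eq_mul, mul_zero]
    have hMp : (0:ℝ) ≤ M ^ p := Real.rpow_nonneg hM0 _
    have hK : (0:ℝ) ≤ 2 ^ (p + 1) * (1 + 2 * n.factorial * Real.exp 1) := by positivity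
    positivity
  · -- M > 0
    set m : ℝ := M * (1 + A) ^ ((1:ℝ)/2) with hm_def
    have hsqrt1 : (1:ℝ) ≤ (1 + A) ^ ((1:ℝ)/2) := Real.one_le_rpow h1A (by norm_num)
    have hm0 : 0 < m := by nlinarith
    have hmM : M ≤ m := by nlinarith
    have hs2 : ((1 + A) ^ ((1:ℝ)/2)) ^ (2:ℕ) = 1 + A := by
      rw [← Real.rpow_natCast ((1 + A) ^ ((1:ℝ)/2)) 2, ← Real.rpow_mul (by linarith)]
      norm_num
    -- measurable versions
    set Y : Fin (N + 1) → Ω → ℝ :=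
      fun k => if h : AEMeasurable (X k) μ then h.mk (X k) else X k with hY_def
    have hYae : ∀ k, X k =ᵐ[μ] Y k := by
      intro k
      by_cases h : AEMeasurable (X k) μ
      · simp only [hY_def, dif_pos h]; exact h.ae_eq_mk
      · have hyx : Y k = X k := by simp only [hY_def, dif_neg h]
        rw [hyx]
    have hYmeas : ∀ k, b k ≠ 0 → Measurable (Y k) := by
      intro k hk
      simp only [hY_def, dif_pos (haem k hk)]
      exact (haem k hk).measurable_mk
    have hYindep : iIndepFun Y μ :=
      iIndepFun_congr_ae hindep hYae
    set Z : Fin (N + 1) → Ω → ℝ := fun k ω => if Y k ω = 1 then (1:ℝ) else 0 with hZ_def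
    have hZ01 : ∀ k ω, Z k ω = 0 ∨ Z k ω = 1 := by
      intro k ω; by_cases h : Y k ω = 1 <;> simp [hZ_def, h]
    have hZae : ∀ k, b k ≠ 0 → X k =ᵐ[μ] Z k := by
      intro k hk
      filter_upwards [hYae k] with ω hω
      rcases h01 k ω with h | h
      · have h1 : Y k ω ≠ 1 := by rw [← hω, h]; norm_num
        simp [hZ_def, h1, h]
      · have h1 : Y k ω = 1 := by rw [← hω, h]
        simp [hZ_def, h1, h]
    have hZint : ∀ k, b k ≠ 0 → ∫ ω, Z k ω ∂μ = α k := by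
      intro k hk
      rw [← integral_congr_ae (hZae k hk)]
      exact hint k
    have hZmeas : ∀ k, b k ≠ 0 → Measurable (Z k) := by
      intro k hk
      exact Measurable.ite ((hYmeas k hk) (MeasurableSet.singleton 1)) measurable_const
        measurable_const
    have hZbd : ∀ k ω, |Z k ω - α k| ≤ 1 := by
      intro k ω
      obtain ⟨ha0, ha1⟩ := hα k
      rcases hZ01 k ω with h | h <;> rw [h, abs_le] <;> constructor <;> linarith
    -- the exponential bound
    have hexp : ∀ c : Fin (N + 1) → ℝ, (∀ k, |c k| ≤ M) → (∀ k, c k ≠ 0 → b k ≠ 0) →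
        ∫ ω, Real.exp (∑ k, m⁻¹ * c k * (Z k ω - α k)) ∂μ ≤ Real.exp 1 := by
      intro c hcM hcb
      have hu : ∀ k, |m⁻¹ * c k| ≤ 1 := by
        intro k
        rw [abs_mul, _root_.abs_of_nonneg (inv_nonneg.2 hm0.le), inv_mul_eq_div, div_le_one hm0]
        exact le_trans (hcM k) hmM
      have h := exp_sum_bound α c hm0 Y hα hYindep
        (fun k hk => hYmeas k (hcb k hk)) (fun k hk => hZint k (hcb k hk)) hu
      refine le_trans h ?_
      apply Real.exp_le_exp.2
      have hterm : ∀ k, α k * (m⁻¹ * c k) ^ 2 ≤ α k * (M / m) ^ 2 := by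
        intro k
        have h1 : (m⁻¹ * c k) ^ 2 ≤ (M / m) ^ 2 := by
          rw [div_eq_inv_mul, mul_pow, mul_pow]
          apply mul_le_mul_of_nonneg_left _ (by positivity)
          rw [← _root_.sq_abs (c k)]
          exact pow_le_pow_left₀ (abs_nonneg _) (hcM k) 2
        nlinarith [(hα k).1]
      have hms : (M / m) ^ 2 = 1 / (1 + A) := by
        rw [hm_def]
        rw [div_pow, mul_pow, hs2]
        have hM' : M ^ 2 ≠ 0 := by positivity
        field_simp
      calc ∑ k, α k * (m⁻¹ * c k) ^ 2 ≤ ∑ k, α k * (M / m) ^ 2 :=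
            Finset.sum_le_sum fun k _ => hterm k
        _ = A * (M / m) ^ 2 := by rw [← Finset.sum_mul]
        _ = A / (1 + A) := by rw [hms]; ring
        _ ≤ 1 := by rw [div_le_one (by linarith)]; linarith
    -- replace X by Z in the integrand
    have hFae : (fun ω => ‖∑ k, (b k : ℂ) * ((X k ω : ℝ) - α k)‖ ^ p)
        =ᵐ[μ] (fun ω => ‖∑ k, (b k : ℂ) * ((Z k ω : ℝ) - α k)‖ ^ p) := by
      have hall : ∀ᵐ ω ∂μ, ∀ k, b k ≠ 0 → X k ω = Z k ω := by
        rw [ae_all_iff]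
        intro k
        by_cases hk : b k = 0
        · filter_upwards with ω h
          exact absurd h (by simpa using hk)
        · filter_upwards [hZae k hk] with ω h
          exact fun _ => h
      filter_upwards [hall] with ω hω
      have hsum : (∑ k, (b k : ℂ) * ((X k ω : ℝ) - α k))
          = ∑ k, (b k : ℂ) * ((Z k ω : ℝ) - α k) := by
        apply Finset.sum_congr rfl
        intro k _
        by_cases hk : b k = 0
        · rw [hk]; ring
        · rw [hω k hk]
      rw [hsum]
    rw [integral_congr_ae hFae]
    -- real and imaginary parts
    set R : Ω → ℝ := fun ω => ∑ k, (b k).re * (Z k ω - α k) with hR_def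
    set I : Ω → ℝ := fun ω => ∑ k, (b k).im * (Z k ω - α k) with hI_def
    set e₁ : Ω → ℝ := fun ω => Real.exp (m⁻¹ * R ω) with he1_def
    set e₂ : Ω → ℝ := fun ω => Real.exp (-(m⁻¹ * R ω)) with he2_def
    set e₃ : Ω → ℝ := fun ω => Real.exp (m⁻¹ * I ω) with he3_def
    set e₄ : Ω → ℝ := fun ω => Real.exp (-(m⁻¹ * I ω)) with he4_def
    set G : Ω → ℝ := fun ω =>
      2 ^ p * m ^ p * (2 + n.factorial * (e₁ ω + e₂ ω + e₃ ω + e₄ ω)) with hG_def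
    have hmp0 : (0:ℝ) ≤ m ^ p := Real.rpow_nonneg hm0.le _
    have h2p0 : (0:ℝ) ≤ 2 ^ p := Real.rpow_nonneg (by norm_num) _
    -- pointwise bound
    have hpoint : ∀ ω, ‖∑ k, (b k : ℂ) * ((Z k ω : ℝ) - α k)‖ ^ p ≤ G ω := by
      intro ω
      have hre : (∑ k, (b k : ℂ) * ((Z k ω : ℝ) - α k)).re = R ω := by
        rw [Complex.re_sum]
        apply Finset.sum_congr rfl
        intro k _
        simp [Complex.mul_re]
      have him : (∑ k, (b k : ℂ) * ((Z k ω : ℝ) - α k)).im = I ω := by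
        rw [Complex.im_sum]
        apply Finset.sum_congr rfl
        intro k _
        simp [Complex.mul_im]
      have habs : ‖∑ k, (b k : ℂ) * ((Z k ω : ℝ) - α k)‖ ≤ |R ω| + |I ω| := by
        rw [← hre, ← him]
        exact Complex.norm_le_abs_re_add_abs_im _
      have hstep1 : ‖∑ k, (b k : ℂ) * ((Z k ω : ℝ) - α k)‖ ^ p
          ≤ (|R ω| + |I ω|) ^ p :=
        Real.rpow_le_rpow (norm_nonneg _) habs hp0.le
      have hstep2 : (|R ω| + |I ω|) ^ p ≤ 2 ^ p * (|R ω| ^ p + |I ω| ^ p) :=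
        add_rpow_le (abs_nonneg _) (abs_nonneg _) hp0.le
      have hterm : ∀ (T : Ω → ℝ), |T ω| ^ p ≤ m ^ p *
          (1 + n.factorial * (Real.exp (m⁻¹ * T ω) + Real.exp (-(m⁻¹ * T ω)))) := by
        intro T
        have h1 : |T ω| = m * (m⁻¹ * |T ω|) := by field_simp
        have h2 : |T ω| ^ p = m ^ p * (m⁻¹ * |T ω|) ^ p := by
          rw [h1, Real.mul_rpow hm0.le (by positivity)]
          rw [← h1]
        have h3 : (m⁻¹ * |T ω|) ^ p ≤ 1 + (m⁻¹ * |T ω|) ^ n :=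
          rpow_le_one_add_pow (by positivity) hp0.le hn
        have h4 : (m⁻¹ * |T ω|) ^ n ≤ n.factorial * Real.exp (m⁻¹ * |T ω|) :=
          pow_le_factorial_mul_exp n (by positivity)
        have h5 : Real.exp (m⁻¹ * |T ω|) ≤ Real.exp (m⁻¹ * T ω) + Real.exp (-(m⁻¹ * T ω)) := by
          have : m⁻¹ * |T ω| = |m⁻¹ * T ω| := by
            rw [abs_mul, _root_.abs_of_nonneg (inv_nonneg.2 hm0.le)]
          rw [this]
          exact exp_abs_le
        have hfac0 : (0:ℝ) ≤ (n.factorial : ℝ) := by positivity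
        calc |T ω| ^ p = m ^ p * (m⁻¹ * |T ω|) ^ p := h2
          _ ≤ m ^ p * (1 + n.factorial * (Real.exp (m⁻¹ * T ω) + Real.exp (-(m⁻¹ * T ω)))) := by
              apply mul_le_mul_of_nonneg_left _ hmp0
              calc (m⁻¹ * |T ω|) ^ p ≤ 1 + (m⁻¹ * |T ω|) ^ n := h3
                _ ≤ 1 + n.factorial * Real.exp (m⁻¹ * |T ω|) := by linarith
                _ ≤ 1 + n.factorial * (Real.exp (m⁻¹ * T ω) + Real.exp (-(m⁻¹ * T ω))) := by
                    nlinarith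
      have hR' := hterm R
      have hI' := hterm I
      calc ‖∑ k, (b k : ℂ) * ((Z k ω : ℝ) - α k)‖ ^ p
          ≤ (|R ω| + |I ω|) ^ p := hstep1
        _ ≤ 2 ^ p * (|R ω| ^ p + |I ω| ^ p) := hstep2
        _ ≤ 2 ^ p * (m ^ p * (1 + n.factorial * (e₁ ω + e₂ ω))
              + m ^ p * (1 + n.factorial * (e₃ ω + e₄ ω))) := by
            apply mul_le_mul_of_nonneg_left _ h2p0
            exact add_le_add hR' hI'
        _ = G ω := by simp only [hG_def]; ring
    -- measurability and integrability
    have hTmeas : ∀ c : Fin (N + 1) → ℝ, (∀ k, c k ≠ 0 → b k ≠ 0) →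
        Measurable (fun ω => ∑ k, c k * (Z k ω - α k)) := by
      intro c hc
      apply Finset.measurable_sum
      intro k _
      by_cases hk : c k = 0
      · rw [show (fun ω => c k * (Z k ω - α k)) = fun _ => (0:ℝ) from
          funext fun ω => by rw [hk]; ring]
        exact measurable_const
      · exact ((hZmeas k (hc k hk)).sub_const _).const_mul _
    have hRmeas : Measurable R := hTmeas _ (fun k hk => fun hb => hk (by rw [hb]; simp))
    have hImeas : Measurable I := hTmeas _ (fun k hk => fun hb => hk (by rw [hb]; simp))
    have hTbd : ∀ c : Fin (N + 1) → ℝ, (∀ k, |c k| ≤ M) →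
        ∀ ω, |∑ k, c k * (Z k ω - α k)| ≤ (N + 1) * M := by
      intro c hc ω
      calc |∑ k, c k * (Z k ω - α k)| ≤ ∑ k, |c k * (Z k ω - α k)| :=
            Finset.abs_sum_le_sum_abs _ _
        _ ≤ ∑ _k : Fin (N + 1), M := by
            apply Finset.sum_le_sum
            intro k _
            rw [abs_mul]
            calc |c k| * |Z k ω - α k| ≤ M * 1 :=
                  mul_le_mul (hc k) (hZbd k ω) (abs_nonneg _) hM0
              _ = M := mul_one M
        _ = (N + 1) * M := by
            rw [Finset.sum_const, Finset.card_univ, Fintype.card_fin, nsmul_eq_mul]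
            push_cast
            ring
    have hRbd : ∀ ω, |R ω| ≤ (N + 1) * M :=
      hTbd _ (fun k => le_trans (Complex.abs_re_le_norm _) (hMk k))
    have hIbd : ∀ ω, |I ω| ≤ (N + 1) * M :=
      hTbd _ (fun k => le_trans (Complex.abs_im_le_norm _) (hMk k))
    have hexpint : ∀ (T : Ω → ℝ) (s : ℝ), Measurable T → (∀ ω, |T ω| ≤ (N + 1) * M) →
        Integrable (fun ω => Real.exp (s * T ω)) μ := by
      intro T s hTm hTb
      apply Integrable.mono' (integrable_const (Real.exp (|s| * ((N + 1) * M))))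
      · exact ((hTm.const_mul s).exp).aestronglyMeasurable
      · filter_upwards with ω
        rw [Real.norm_eq_abs, _root_.abs_of_pos (Real.exp_pos _)]
        apply Real.exp_le_exp.2
        calc s * T ω ≤ |s * T ω| := le_abs_self _
          _ = |s| * |T ω| := abs_mul _ _
          _ ≤ |s| * ((N + 1) * M) := by
              apply mul_le_mul_of_nonneg_left (hTb ω) (abs_nonneg _)
    have he1int : Integrable e₁ μ := by
      have := hexpint R m⁻¹ hRmeas hRbd
      simpa [he1_def] using this
    have he2int : Integrable e₂ μ := by
      have := hexpint R (-m⁻¹) hRmeas hRbd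
      simp only [he2_def]
      convert this using 2 with ω
      ring_nf
    have he3int : Integrable e₃ μ := by
      have := hexpint I m⁻¹ hImeas hIbd
      simpa [he3_def] using this
    have he4int : Integrable e₄ μ := by
      have := hexpint I (-m⁻¹) hImeas hIbd
      simp only [he4_def]
      convert this using 2 with ω
      ring_nf
    have hGint : Integrable G μ := by
      apply Integrable.const_mul
      apply Integrable.add (integrable_const 2)
      exact (((he1int.add he2int).add he3int).add he4int).const_mul _
    -- integral bound
    have hmono : (∫ ω, ‖∑ k, (b k : ℂ) * ((Z k ω : ℝ) - α k)‖ ^ p ∂μ)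
        ≤ ∫ ω, G ω ∂μ := by
      apply integral_mono_of_nonneg
      · filter_upwards with ω
        exact Real.rpow_nonneg (norm_nonneg _) _
      · exact hGint
      · filter_upwards with ω
        exact hpoint ω
    refine le_trans hmono ?_
    -- compute and bound ∫ G
    have hGval : ∫ ω, G ω ∂μ = 2 ^ p * m ^ p *
        (2 + n.factorial * ((∫ ω, e₁ ω ∂μ) + (∫ ω, e₂ ω ∂μ) + (∫ ω, e₃ ω ∂μ)
          + (∫ ω, e₄ ω ∂μ))) := by
      have h12 : Integrable (fun a => e₁ a + e₂ a) μ := by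
        exact he1int.add he2int
      have h123 : Integrable (fun a => e₁ a + e₂ a + e₃ a) μ := by
        exact h12.add he3int
      have h1234 : Integrable (fun a => e₁ a + e₂ a + e₃ a + e₄ a) μ := by
        exact h123.add he4int
      have hsum4int : Integrable (fun a => (n.factorial:ℝ) * (e₁ a + e₂ a + e₃ a + e₄ a)) μ := by
        simpa using h1234.const_mul (n.factorial:ℝ)
      rw [integral_const_mul]
      congr 1
      rw [integral_add (integrable_const 2) hsum4int]
      rw [integral_const_mul]
      simp only [integral_const, probReal_univ, ENNReal.toReal_one, smul_eq_mul, one_mul]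
      congr 1
      congr 1
      rw [integral_add h123 he4int, integral_add h12 he3int, integral_add he1int he2int]
    -- bound the four integrals by exp 1
    have hsum_form : ∀ (c : Fin (N + 1) → ℝ) (s : ℝ) (ω : Ω),
        s * (∑ k, c k * (Z k ω - α k)) = ∑ k, m⁻¹ * ((m * s) * c k) * (Z k ω - α k) := by
      intro c s ω
      rw [Finset.mul_sum]
      apply Finset.sum_congr rfl
      intro k _
      field_simp
    have hE : ∀ (c : Fin (N + 1) → ℝ), (∀ k, |c k| ≤ M) → (∀ k, c k ≠ 0 → b k ≠ 0) →
        ∀ s : ℝ, |s| = 1 → (∫ ω, Real.exp (s * m⁻¹ * (∑ k, c k * (Z k ω - α k))) ∂μ)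
          ≤ Real.exp 1 := by
      intro c hcM hcb s hs
      have hcsM : ∀ k, |s * c k| ≤ M := by
        intro k
        rw [abs_mul, hs, one_mul]
        exact hcM k
      have hcsb : ∀ k, s * c k ≠ 0 → b k ≠ 0 := by
        intro k h
        apply hcb k
        intro h0
        apply h
        rw [h0, mul_zero]
      have h := hexp (fun k => s * c k) hcsM hcsb
      refine le_trans (le_of_eq ?_) h
      congr 1
      funext ω
      congr 1
      rw [mul_assoc, Finset.mul_sum, Finset.mul_sum]
      apply Finset.sum_congr rfl
      intro k _
      ring
    have hcRe : ∀ k, |(b k).re| ≤ M := fun k => le_trans (Complex.abs_re_le_norm _) (hMk k)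
    have hcIm : ∀ k, |(b k).im| ≤ M := fun k => le_trans (Complex.abs_im_le_norm _) (hMk k)
    have hbRe : ∀ k, (b k).re ≠ 0 → b k ≠ 0 := by
      intro k h hb; exact h (by rw [hb]; simp)
    have hbIm : ∀ k, (b k).im ≠ 0 → b k ≠ 0 := by
      intro k h hb; exact h (by rw [hb]; simp)
    have hE1 : (∫ ω, e₁ ω ∂μ) ≤ Real.exp 1 := by
      have := hE (fun k => (b k).re) hcRe hbRe 1 (by norm_num)
      refine le_trans (le_of_eq ?_) this
      congr 1; funext ω; simp only [he1_def, hR_def]; congr 1; ring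
    have hE2 : (∫ ω, e₂ ω ∂μ) ≤ Real.exp 1 := by
      have := hE (fun k => (b k).re) hcRe hbRe (-1) (by norm_num)
      refine le_trans (le_of_eq ?_) this
      congr 1; funext ω; simp only [he2_def, hR_def]; congr 1; ring
    have hE3 : (∫ ω, e₃ ω ∂μ) ≤ Real.exp 1 := by
      have := hE (fun k => (b k).im) hcIm hbIm 1 (by norm_num)
      refine le_trans (le_of_eq ?_) this
      congr 1; funext ω; simp only [he3_def, hI_def]; congr 1; ring
    have hE4 : (∫ ω, e₄ ω ∂μ) ≤ Real.exp 1 := by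
      have := hE (fun k => (b k).im) hcIm hbIm (-1) (by norm_num)
      refine le_trans (le_of_eq ?_) this
      congr 1; funext ω; simp only [he4_def, hI_def]; congr 1; ring
    rw [hGval]
    have hmp : m ^ p = M ^ p * (1 + A) ^ (p / 2) := by
      rw [hm_def, Real.mul_rpow hM0 (Real.rpow_nonneg (by linarith) _)]
      rw [← Real.rpow_mul (by linarith)]
      rw [show (1:ℝ)/2 * p = p / 2 by ring]
    have he1nn : 0 ≤ ∫ ω, e₁ ω ∂μ := integral_nonneg fun ω => (Real.exp_pos _).le
    have hfac0 : (0:ℝ) ≤ (n.factorial : ℝ) := by positivity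
    calc 2 ^ p * m ^ p * (2 + n.factorial * ((∫ ω, e₁ ω ∂μ) + (∫ ω, e₂ ω ∂μ)
          + (∫ ω, e₃ ω ∂μ) + (∫ ω, e₄ ω ∂μ)))
        ≤ 2 ^ p * m ^ p * (2 + n.factorial * (4 * Real.exp 1)) := by
          apply mul_le_mul_of_nonneg_left _ (by positivity)
          have : (∫ ω, e₁ ω ∂μ) + (∫ ω, e₂ ω ∂μ) + (∫ ω, e₃ ω ∂μ) + (∫ ω, e₄ ω ∂μ)
              ≤ 4 * Real.exp 1 := by linarith
          nlinarith
      _ = (2 ^ (p + 1) * (1 + 2 * n.factorial * Real.exp 1)) * M ^ p * (1 + A) ^ (p / 2) := by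
          rw [Real.rpow_add (by norm_num : (0:ℝ) < 2) p 1, Real.rpow_one, hmp]
          ring
set_option maxHeartbeats 2000000 in
lemma eliminate (p : ℝ) (hp0 : 0 < p)
    (N : ℕ) (α : Fin (N + 1) → ℝ) (b : Fin (N + 1) → ℂ)
    (Ω : Type) (mΩ : MeasurableSpace Ω) (μ : Measure Ω)
    [IsProbabilityMeasure μ] (X : Fin (N + 1) → Ω → ℝ)
    (hindep : iIndepFun X μ)
    (h01 : ∀ k ω, X k ω = 0 ∨ X k ω = 1)
    (hint : ∀ k, ∫ ω, X k ω ∂μ = α k)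
    (j : Fin (N + 1)) (hbj : b j ≠ 0) (hXj : ¬AEMeasurable (X j) μ)
    (h_int : Integrable (fun ω => ‖∑ k, (b k : ℂ) * ((X k ω : ℝ) - α k)‖ ^ p) μ) :
    (fun ω => ‖∑ k, (b k : ℂ) * ((X k ω : ℝ) - α k)‖ ^ p) =ᵐ[μ]
      (fun ω => ‖∑ k, (Function.update b j 0 k : ℂ) * ((X k ω : ℝ) - α k)‖ ^ p) := by
  classical
  -- α j = 0
  have hXjint : ¬Integrable (X j) μ := fun h => hXj h.aestronglyMeasurable.aemeasurable
  have hαj : α j = 0 := by rw [← hint j, integral_undef hXjint]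
  set F : Ω → ℝ := fun ω => ‖∑ k, (b k : ℂ) * ((X k ω : ℝ) - α k)‖ ^ p with hF_def
  set b' : Fin (N + 1) → ℂ := Function.update b j 0 with hb'_def
  set W : Ω → ℂ := fun ω => ∑ k ∈ Finset.univ.erase j, (b k : ℂ) * ((X k ω : ℝ) - α k) with hW_def
  have hsplit : ∀ ω, (∑ k, (b k : ℂ) * ((X k ω : ℝ) - α k))
      = (b j) * (X j ω : ℝ) + W ω := by
    intro ω
    rw [← Finset.add_sum_erase _ _ (Finset.mem_univ j)]
    rw [hαj]
    push_cast
    ring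
  have hsplit' : ∀ ω, (∑ k, (b' k : ℂ) * ((X k ω : ℝ) - α k)) = W ω := by
    intro ω
    rw [← Finset.add_sum_erase _ _ (Finset.mem_univ j)]
    have h1 : b' j = 0 := by rw [hb'_def]; exact Function.update_self j 0 b
    rw [h1, zero_mul, zero_add]
    apply Finset.sum_congr rfl
    intro k hk
    have h2 : b' k = b k := by
      rw [hb'_def]; exact Function.update_of_ne (Finset.mem_erase.mp hk).1 0 b
    rw [h2]
  -- patterns
  set val : Bool → ℝ := fun t => if t then 1 else 0 with hval_def
  set Atom : (Fin (N + 1) → Bool) → Set Ω :=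
    fun v => ⋂ k ∈ Finset.univ.erase j, X k ⁻¹' {val (v k)} with hAtom_def
  set w : (Fin (N + 1) → Bool) → ℂ :=
    fun v => ∑ k ∈ Finset.univ.erase j, (b k : ℂ) * ((val (v k) : ℝ) - α k) with hw_def
  have hWatom : ∀ v ω, ω ∈ Atom v → W ω = w v := by
    intro v ω hω
    apply Finset.sum_congr rfl
    intro k hk
    have : X k ω = val (v k) := by
      have := Set.mem_iInter₂.mp hω k hk
      simpa using this
    rw [this]
  -- independence products
  have hprod := hindep.measure_inter_preimage_eq_mul
  set A1 : Set Ω := X j ⁻¹' {1} with hA1_def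
  set A0 : Set Ω := X j ⁻¹' {0} with hA0_def
  have hA1A0 : A1ᶜ ⊆ A0 := by
    intro ω hω
    rcases h01 j ω with h | h
    · exact h
    · exact absurd h hω
  have hmeasprod : ∀ (v : Fin (N + 1) → Bool) (c : ℝ),
      μ ((X j ⁻¹' {c}) ∩ Atom v) = μ (X j ⁻¹' {c}) * μ (Atom v) := by
    intro v c
    set sets : Fin (N + 1) → Set ℝ := fun k => if k = j then {c} else {val (v k)} with hsets_def
    have hsets_meas : ∀ k, MeasurableSet (sets k) := by
      intro k
      by_cases h : k = j <;> simp [hsets_def, h]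
    have h1 := hprod Finset.univ (sets := sets) (fun k _ => hsets_meas k)
    have h2 := hprod (Finset.univ.erase j) (sets := sets) (fun k _ => hsets_meas k)
    have huniv : (Finset.univ : Finset (Fin (N + 1))) = insert j (Finset.univ.erase j) :=
      (Finset.insert_erase (Finset.mem_univ j)).symm
    have hatom_eq : (⋂ k ∈ Finset.univ.erase j, X k ⁻¹' sets k) = Atom v := by
      apply Set.iInter₂_congr
      intro k hk
      rw [hsets_def]
      simp only [if_neg (Finset.mem_erase.mp hk).1]
    have hsetsj : sets j = {c} := by rw [hsets_def]; simp
    have hins := Finset.set_biInter_insert j (Finset.univ.erase j) (fun k => X k ⁻¹' sets k)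
    have hLHS : (⋂ k ∈ Finset.univ, X k ⁻¹' sets k) = (X j ⁻¹' {c}) ∩ Atom v := by
      rw [show (⋂ k ∈ Finset.univ, X k ⁻¹' sets k)
          = ⋂ k ∈ insert j (Finset.univ.erase j), X k ⁻¹' sets k from by
        rw [Finset.insert_erase (Finset.mem_univ j)]]
      rw [hins, hatom_eq, hsetsj]
    have hRHS : (∏ k, μ (X k ⁻¹' sets k))
        = μ (X j ⁻¹' {c}) * ∏ k ∈ Finset.univ.erase j, μ (X k ⁻¹' sets k) := by
      rw [← Finset.mul_prod_erase Finset.univ _ (Finset.mem_univ j), hsetsj]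
    rw [hLHS] at h1
    rw [hatom_eq] at h2
    rw [h1, hRHS, ← h2]
  -- the key vanishing
  have hf := h_int.1
  set f : Ω → ℝ := hf.mk F with hf_def
  have hFf : F =ᵐ[μ] f := hf.ae_eq_mk
  have hfmeas : Measurable f := hf.stronglyMeasurable_mk.measurable
  have hNnull : μ {ω | F ω ≠ f ω} = 0 := by
    rw [measure_eq_zero_iff_ae_notMem]
    filter_upwards [hFf] with ω h
    simp [h]
  have hFatom1 : ∀ v ω, ω ∈ A1 ∩ Atom v → F ω = ‖w v + b j‖ ^ p := by
    intro v ω ⟨hω1, hω2⟩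
    have hXj1 : X j ω = 1 := hω1
    rw [hF_def]
    simp only
    rw [hsplit ω, hWatom v ω hω2, hXj1]
    norm_num
    ring_nf
  have hFatom0 : ∀ v ω, ω ∈ A0 ∩ Atom v → F ω = ‖w v‖ ^ p := by
    intro v ω ⟨hω1, hω2⟩
    have hXj0 : X j ω = 0 := hω1
    rw [hF_def]
    simp only
    rw [hsplit ω, hWatom v ω hω2, hXj0]
    norm_num
  have hvanish : ∀ v : Fin (N + 1) → Bool,
      ‖w v + b j‖ ^ p ≠ ‖w v‖ ^ p → μ (Atom v) = 0 := by
    intro v hneq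
    by_contra hv
    set w₁ : ℝ := ‖w v + b j‖ ^ p with hw1_def
    set w₂ : ℝ := ‖w v‖ ^ p with hw2_def
    set G : Set Ω := {ω | |f ω - w₁| < |f ω - w₂|} with hG_def
    have hGmeas : MeasurableSet G := by
      apply measurableSet_lt
      · exact (hfmeas.sub_const _).abs
      · exact (hfmeas.sub_const _).abs
    -- A1 ∩ Atom v ∩ Gᶜ ⊆ {F ≠ f}
    have hincl1 : (A1 ∩ Atom v) \ G ⊆ {ω | F ω ≠ f ω} := by
      rintro ω ⟨⟨h1, h2⟩, h3⟩ hFf'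
      apply h3
      have hFω : F ω = w₁ := hFatom1 v ω ⟨h1, h2⟩
      have hfω : f ω = w₁ := by rw [← hFf', hFω]
      rw [hG_def]
      simp only [Set.mem_setOf_eq, hfω]
      rw [sub_self, abs_zero]
      rw [abs_pos]
      exact sub_ne_zero.mpr hneq
    have hincl0 : A0 ∩ Atom v ∩ G ⊆ {ω | F ω ≠ f ω} := by
      rintro ω ⟨⟨h1, h2⟩, h3⟩ hFf'
      have hFω : F ω = w₂ := hFatom0 v ω ⟨h1, h2⟩
      have hfω : f ω = w₂ := by rw [← hFf', hFω]
      rw [hG_def] at h3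
      simp only [Set.mem_setOf_eq, hfω] at h3
      rw [sub_self, abs_zero] at h3
      have := abs_nonneg (w₂ - w₁)
      linarith [h3]
    -- measure estimates
    have hm1 : μ (A1 ∩ Atom v) ≤ μ (Atom v ∩ G) := by
      calc μ (A1 ∩ Atom v) ≤ μ ((A1 ∩ Atom v) ∩ G) + μ ((A1 ∩ Atom v) \ G) :=
            measure_le_inter_add_diff μ _ G
        _ ≤ μ (Atom v ∩ G) + 0 := by
            apply add_le_add
            · apply measure_mono
              rintro ω ⟨⟨_, h2⟩, h3⟩
              exact ⟨h2, h3⟩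
            · exact le_trans (measure_mono hincl1) (le_of_eq hNnull)
        _ = μ (Atom v ∩ G) := add_zero _
    have hm0 : μ (A0 ∩ Atom v) ≤ μ (Atom v \ G) := by
      calc μ (A0 ∩ Atom v) ≤ μ ((A0 ∩ Atom v) ∩ G) + μ ((A0 ∩ Atom v) \ G) :=
            measure_le_inter_add_diff μ _ G
        _ ≤ 0 + μ (Atom v \ G) := by
            apply add_le_add
            · exact le_trans (measure_mono hincl0) (le_of_eq hNnull)
            · apply measure_mono
              rintro ω ⟨⟨_, h2⟩, h3⟩
              exact ⟨h2, h3⟩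
        _ = μ (Atom v \ G) := zero_add _
    have hsum : (μ A1 + μ A0) * μ (Atom v) ≤ μ (Atom v) := by
      calc (μ A1 + μ A0) * μ (Atom v) = μ A1 * μ (Atom v) + μ A0 * μ (Atom v) := by
            rw [add_mul]
        _ = μ (A1 ∩ Atom v) + μ (A0 ∩ Atom v) := by
            rw [hmeasprod v 1, hmeasprod v 0]
        _ ≤ μ (Atom v ∩ G) + μ (Atom v \ G) := add_le_add hm1 hm0
        _ = μ (Atom v) := measure_inter_add_diff _ hGmeas
    have hle1 : μ A1 + μ A0 ≤ 1 := by
      have hAtom_fin : μ (Atom v) ≠ ⊤ := measure_ne_top μ _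
      refine (ENNReal.mul_le_mul_iff_left hv hAtom_fin).1 ?_
      rw [one_mul]
      exact hsum
    have hge1 : (1:ENNReal) ≤ μ A1 + μ A0 := by
      have huniv : (Set.univ : Set Ω) ⊆ A1 ∪ A0 := by
        intro ω _
        rcases h01 j ω with h | h
        · exact Or.inr h
        · exact Or.inl h
      calc (1:ENNReal) = μ Set.univ := (measure_univ).symm
        _ ≤ μ (A1 ∪ A0) := measure_mono huniv
        _ ≤ μ A1 + μ A0 := measure_union_le _ _
    have heq1 : μ A1 + μ A0 = 1 := le_antisymm hle1 hge1
    -- A1 is null measurable, so X j is a.e. measurable: contradiction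
    set B1 := toMeasurable μ A1 with hB1_def
    set B0 := toMeasurable μ A0 with hB0_def
    have hB1 : μ B1 = μ A1 := measure_toMeasurable _
    have hB0 : μ B0 = μ A0 := measure_toMeasurable _
    have hBuniv : B1 ∪ B0 = Set.univ := by
      apply Set.eq_univ_of_univ_subset
      intro ω _
      rcases h01 j ω with h | h
      · exact Or.inr (subset_toMeasurable μ A0 h)
      · exact Or.inl (subset_toMeasurable μ A1 h)
    have hinter : μ (B1 ∩ B0) = 0 := by
      have h := measure_union_add_inter₀ (μ := μ) B1
        (measurableSet_toMeasurable μ A0).nullMeasurableSet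
      rw [hBuniv, measure_univ, hB1, hB0, heq1] at h
      have h1 : (1:ENNReal) ≠ ⊤ := ENNReal.one_ne_top
      calc μ (B1 ∩ B0) = 1 + μ (B1 ∩ B0) - 1 := by
            rw [ENNReal.add_sub_cancel_left h1]
        _ = 1 - 1 := by rw [h]
        _ = 0 := by simp
    have hdiffnull : μ (B1 \ A1) = 0 := by
      apply measure_mono_null _ hinter
      intro ω ⟨h1, h2⟩
      refine ⟨h1, ?_⟩
      apply subset_toMeasurable μ A0
      rcases h01 j ω with h | h
      · exact h
      · exact absurd h h2
    have haem : AEMeasurable (X j) μ := by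
      refine ⟨B1.indicator (fun _ => (1:ℝ)),
        measurable_const.indicator (measurableSet_toMeasurable μ A1), ?_⟩
      have hae : ∀ᵐ ω ∂μ, ω ∉ B1 \ A1 := measure_eq_zero_iff_ae_notMem.1 hdiffnull
      filter_upwards [hae] with ω hω
      by_cases h : ω ∈ A1
      · have h1 : ω ∈ B1 := subset_toMeasurable μ A1 h
        rw [Set.indicator_of_mem h1]
        exact h
      · have h1 : ω ∉ B1 := fun hB => hω ⟨hB, h⟩
        rw [Set.indicator_of_notMem h1]
        rcases h01 j ω with hh | hh
        · exact hh
        · exact absurd hh h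
    exact hXj haem
  -- conclude: F = F' off a null set
  set Bad : Finset (Fin (N + 1) → Bool) :=
    Finset.univ.filter (fun v => ‖w v + b j‖ ^ p ≠ ‖w v‖ ^ p)
    with hBad_def
  set E : Set Ω := ⋃ v ∈ Bad, Atom v with hE_def
  have hEnull : μ E = 0 := by
    refine le_antisymm ?_ (by positivity)
    calc μ E ≤ ∑ v ∈ Bad, μ (Atom v) := measure_biUnion_finset_le _ _
      _ = 0 := by
          apply Finset.sum_eq_zero
          intro v hv
          exact hvanish v (Finset.mem_filter.mp hv).2
  have hsubset : {ω | F ω ≠ ‖∑ k, (b' k : ℂ) * ((X k ω : ℝ) - α k)‖ ^ p} ⊆ E := by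
    intro ω hω
    set v : Fin (N + 1) → Bool := fun k => decide (X k ω = 1) with hv_def
    have hωatom : ω ∈ Atom v := by
      rw [hAtom_def]
      apply Set.mem_iInter₂.mpr
      intro k _
      simp only [Set.mem_preimage, Set.mem_singleton_iff]
      rcases h01 k ω with h | h
      · rw [hv_def]
        simp only [h]
        norm_num [hval_def]
      · rw [hv_def]
        simp only [h]
        norm_num [hval_def]
    by_contra hωE
    apply hω
    have hgood : ‖w v + b j‖ ^ p = ‖w v‖ ^ p := by
      by_contra hne
      exact hωE (Set.mem_biUnion (Finset.mem_filter.mpr ⟨Finset.mem_univ v, hne⟩) hωatom)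
    have hF' : ‖∑ k, (b' k : ℂ) * ((X k ω : ℝ) - α k)‖ ^ p
        = ‖w v‖ ^ p := by
      rw [hsplit' ω, hWatom v ω hωatom]
    rw [hF']
    rcases h01 j ω with h | h
    · exact hFatom0 v ω ⟨h, hωatom⟩
    · rw [hFatom1 v ω ⟨h, hωatom⟩, hgood]
  rw [Filter.eventuallyEq_iff_exists_mem]
  refine ⟨{ω | F ω ≠ ‖∑ k, (b' k : ℂ) * ((X k ω : ℝ) - α k)‖ ^ p}ᶜ, ?_, ?_⟩
  · rw [mem_ae_iff]
    rw [compl_compl]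
    exact measure_mono_null hsubset hEnull
  · intro ω hω
    exact not_not.mp hω
lemma main_aux (p : ℝ) (hp : 2 < p) (n : ℕ) (hn : p ≤ n) (B : ℕ) :
    ∀ (N : ℕ) (α : Fin (N + 1) → ℝ) (b : Fin (N + 1) → ℂ)
      (Ω : Type) (mΩ : MeasurableSpace Ω) (μ : Measure Ω),
      IsProbabilityMeasure μ →
      ∀ X : Fin (N + 1) → Ω → ℝ,
      (∀ k, α k ∈ Set.Icc (0:ℝ) 1) →
      iIndepFun X μ →
      (∀ k ω, X k ω = 0 ∨ X k ω = 1) →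
      (∀ k, ∫ ω, X k ω ∂μ = α k) →
      {k | b k ≠ 0 ∧ ¬AEMeasurable (X k) μ}.ncard ≤ B →
      (∫ ω, ‖∑ k, (b k : ℂ) * ((X k ω : ℝ) - α k)‖ ^ p ∂μ) ≤
        (2 ^ (p + 1) * (1 + 2 * n.factorial * Real.exp 1)) * (⨆ k, ‖b k‖) ^ p *
          (1 + ∑ k, α k) ^ (p / 2) := by
  induction B with
  | zero =>
    intro N α b Ω mΩ μ hprob X hα hindep h01 hint hcard
    haveI := hprob
    have hgood : ∀ k, b k ≠ 0 → AEMeasurable (X k) μ := by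
      intro k hk
      by_contra hnm
      have hmem : k ∈ {k | b k ≠ 0 ∧ ¬AEMeasurable (X k) μ} := ⟨hk, hnm⟩
      have hfin : {k | b k ≠ 0 ∧ ¬AEMeasurable (X k) μ}.Finite := Set.toFinite _
      have := (Set.ncard_eq_zero hfin).1 (Nat.le_zero.1 hcard)
      rw [this] at hmem
      exact hmem
    exact good_case p hp n hn N α b Ω mΩ μ X hα hindep h01 hint hgood
  | succ B ih =>
    intro N α b Ω mΩ μ hprob X hα hindep h01 hint hcard
    haveI := hprob
    by_cases hgood : ∀ k, b k ≠ 0 → AEMeasurable (X k) μ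
    · exact good_case p hp n hn N α b Ω mΩ μ X hα hindep h01 hint hgood
    · push_neg at hgood
      obtain ⟨j, hbj, hXj⟩ := hgood
      have hp0 : (0:ℝ) < p := by linarith
      -- nonnegativity of RHS
      have hM0 : (0:ℝ) ≤ ⨆ k, ‖b k‖ :=
        Real.iSup_nonneg fun k => norm_nonneg _
      have hA0 : (0:ℝ) ≤ 1 + ∑ k, α k := by
        have : (0:ℝ) ≤ ∑ k, α k := Finset.sum_nonneg fun k _ => (hα k).1
        linarith
      have hRHS0 : (0:ℝ) ≤ (2 ^ (p + 1) * (1 + 2 * n.factorial * Real.exp 1)) *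
          (⨆ k, ‖b k‖) ^ p * (1 + ∑ k, α k) ^ (p / 2) := by
        have h1 : (0:ℝ) ≤ (⨆ k, ‖b k‖) ^ p := Real.rpow_nonneg hM0 _
        have h2 : (0:ℝ) ≤ (1 + ∑ k, α k) ^ (p / 2) := Real.rpow_nonneg hA0 _
        have h3 : (0:ℝ) ≤ 2 ^ (p + 1) * (1 + 2 * n.factorial * Real.exp 1) := by positivity
        positivity
      by_cases h_int : Integrable
        (fun ω => ‖∑ k, (b k : ℂ) * ((X k ω : ℝ) - α k)‖ ^ p) μ
      · -- eliminate the bad coordinate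
        have hae := eliminate p hp0 N α b Ω mΩ μ X hindep h01 hint j hbj hXj h_int
        rw [integral_congr_ae hae]
        set b' : Fin (N + 1) → ℂ := Function.update b j 0 with hb'_def
        have hcard' : {k | b' k ≠ 0 ∧ ¬AEMeasurable (X k) μ}.ncard ≤ B := by
          have hsub : {k | b' k ≠ 0 ∧ ¬AEMeasurable (X k) μ} ⊆
              {k | b k ≠ 0 ∧ ¬AEMeasurable (X k) μ} \ {j} := by
            intro k ⟨hk1, hk2⟩
            have hkj : k ≠ j := by
              intro h
              apply hk1
              rw [h, hb'_def]
              exact Function.update_self j 0 b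
            have : b' k = b k := by rw [hb'_def]; exact Function.update_of_ne hkj 0 b
            exact ⟨⟨this ▸ hk1, hk2⟩, hkj⟩
          have hjmem : j ∈ {k | b k ≠ 0 ∧ ¬AEMeasurable (X k) μ} := ⟨hbj, hXj⟩
          have hfin : {k | b k ≠ 0 ∧ ¬AEMeasurable (X k) μ}.Finite := Set.toFinite _
          calc {k | b' k ≠ 0 ∧ ¬AEMeasurable (X k) μ}.ncard
              ≤ ({k | b k ≠ 0 ∧ ¬AEMeasurable (X k) μ} \ {j}).ncard :=
                Set.ncard_le_ncard hsub (Set.toFinite _)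
            _ = {k | b k ≠ 0 ∧ ¬AEMeasurable (X k) μ}.ncard - 1 :=
                Set.ncard_diff_singleton_of_mem hjmem
            _ ≤ B := by omega
        have hIH := ih N α b' Ω mΩ μ hprob X hα hindep h01 hint hcard'
        refine le_trans hIH ?_
        -- compare the constants
        have hb'le : (⨆ k, ‖b' k‖) ≤ ⨆ k, ‖b k‖ := by
          apply ciSup_le
          intro k
          by_cases hkj : k = j
          · rw [hkj, hb'_def]
            rw [Function.update_self j 0 b]
            simp only [norm_zero]
            exact le_trans (norm_nonneg _)
              (le_ciSup (f := fun k => ‖b k‖)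
                (Set.Finite.bddAbove (Set.finite_range _)) j)
          · rw [hb'_def, Function.update_of_ne hkj 0 b]
            exact le_ciSup (f := fun k => ‖b k‖)
              (Set.Finite.bddAbove (Set.finite_range _)) k
        have hb'0 : (0:ℝ) ≤ ⨆ k, ‖b' k‖ :=
          Real.iSup_nonneg fun k => norm_nonneg _
        have hpow : (⨆ k, ‖b' k‖) ^ p ≤ (⨆ k, ‖b k‖) ^ p :=
          Real.rpow_le_rpow hb'0 hb'le hp0.le
        have h2 : (0:ℝ) ≤ (1 + ∑ k, α k) ^ (p / 2) := Real.rpow_nonneg hA0 _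
        have h3 : (0:ℝ) ≤ 2 ^ (p + 1) * (1 + 2 * n.factorial * Real.exp 1) := by positivity
        apply mul_le_mul_of_nonneg_right _ h2
        exact mul_le_mul_of_nonneg_left hpow h3
      · rw [integral_undef h_int]
        exact hRHS0

theorem bernoulli_moment_bound (p : ℝ) (hp : 2 < p) :
    ∃ C : ℝ, ∀ (N : ℕ) (α : Fin (N + 1) → ℝ) (b : Fin (N + 1) → ℂ)
      (Ω : Type) (mΩ : MeasurableSpace Ω) (μ : Measure Ω),
      IsProbabilityMeasure μ →
      ∀ X : Fin (N + 1) → Ω → ℝ,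
      (∀ k, α k ∈ Set.Icc (0:ℝ) 1) →
      iIndepFun X μ →
      (∀ k ω, X k ω = 0 ∨ X k ω = 1) →
      (∀ k, ∫ ω, X k ω ∂μ = α k) →
      (∫ ω, ‖∑ k, (b k : ℂ) * ((X k ω : ℝ) - α k)‖ ^ p ∂μ) ≤
        C * (⨆ k, ‖b k‖) ^ p * (1 + ∑ k, α k) ^ (p / 2) := by
  refine ⟨2 ^ (p + 1) * (1 + 2 * (Nat.ceil p).factorial * Real.exp 1), ?_⟩
  intro N α b Ω mΩ μ hprob X hα hindep h01 hint
  exact main_aux p hp (Nat.ceil p) (Nat.le_ceil p)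
    ({k | b k ≠ 0 ∧ ¬AEMeasurable (X k) μ}.ncard) N α b Ω mΩ μ hprob X hα hindep h01 hint
    le_rfl
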